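/- Let Λ : [0,∞) → [0,∞) be absolutely continuous on every compact subinterval of [0,∞), let ν > 0 and K ≥ 0, and let ψ : [0,∞) → [0,∞) be locally integrable with ∫_s^t ψ(τ) dτ ≤ ν·(t − s) + K for all t > s ≥ 0. If Λ'(t) + 2ν·Λ(t) ≤ ψ(t)·Λ(t) for almost every t ≥ 0, then Λ(t) ≤ e^K · Λ(0) · e^{−ν t} for all t ≥ 0. -/

import Mathlib

open MeasureTheory Set


lemma tri_swap (f g : ℝ → ℝ) {s t : ℝ} (hst : s ≤ t)
    (hf : IntegrableOn f (Set.Ioc s t))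
    (hg : Continuous g) :
    ∫ σ in Set.Ioc s t, g σ * (∫ τ in Set.Ioc σ t, f τ)
      = ∫ τ in Set.Ioc s t, (∫ σ in Set.Ioc s τ, g σ) * f τ := by
  set μ := volume.restrict (Set.Ioc s t) with hμ
  have hS : MeasurableSet {p : ℝ × ℝ | p.1 ≤ p.2} :=
    measurableSet_le measurable_fst measurable_snd
  set F : ℝ → ℝ → ℝ := fun σ τ =>
    Set.indicator {p : ℝ × ℝ | p.1 ≤ p.2} (fun p => g p.1 * f p.2) (σ, τ) with hF
  have hgint : Integrable g μ :=
    (hg.continuousOn.integrableOn_compact isCompact_Icc).mono_set Ioc_subset_Icc_self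
  have hmul : Integrable (fun p : ℝ × ℝ => g p.1 * f p.2) (μ.prod μ) :=
    hgint.mul_prod hf
  have hFint : Integrable (Function.uncurry F) (μ.prod μ) := by
    have : Function.uncurry F =
        Set.indicator {p : ℝ × ℝ | p.1 ≤ p.2} (fun p => g p.1 * f p.2) := by
      funext p; cases p; rfl
    rw [this]
    exact hmul.indicator hS
  have swap := integral_integral_swap hFint
  have hL : ∫ σ, (∫ τ, F σ τ ∂μ) ∂μ
      = ∫ σ in Set.Ioc s t, g σ * (∫ τ in Set.Ioc σ t, f τ) := by
    refine setIntegral_congr_fun measurableSet_Ioc (fun σ hσ => ?_)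
    have h1 : ∀ τ : ℝ, F σ τ = Set.indicator (Set.Ici σ) (fun τ => g σ * f τ) τ := by
      intro τ
      by_cases h : σ ≤ τ
      · simp [hF, Set.indicator_of_mem, h, Set.mem_Ici.mpr h, Set.mem_setOf_eq]
      · simp [hF, Set.indicator_of_notMem, h, Set.mem_setOf_eq]
    simp_rw [h1]
    rw [setIntegral_indicator measurableSet_Ici]
    have h2 : Set.Ioc s t ∩ Set.Ici σ = Set.Icc σ t := by
      ext x
      simp only [Set.mem_inter_iff, Set.mem_Ioc, Set.mem_Ici, Set.mem_Icc]
      constructor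
      · rintro ⟨⟨_, h2⟩, h3⟩; exact ⟨h3, h2⟩
      · rintro ⟨h1', h2⟩; exact ⟨⟨lt_of_lt_of_le hσ.1 h1', h2⟩, h1'⟩
    rw [h2, integral_Icc_eq_integral_Ioc, integral_const_mul]
  have hR : ∫ τ, (∫ σ, F σ τ ∂μ) ∂μ
      = ∫ τ in Set.Ioc s t, (∫ σ in Set.Ioc s τ, g σ) * f τ := by
    refine setIntegral_congr_fun measurableSet_Ioc (fun τ hτ => ?_)
    have h1 : ∀ σ : ℝ, F σ τ = Set.indicator (Set.Iic τ) (fun σ => g σ * f τ) σ := by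
      intro σ
      by_cases h : σ ≤ τ
      · simp [hF, Set.indicator_of_mem, h, Set.mem_Iic.mpr h, Set.mem_setOf_eq]
      · simp [hF, Set.indicator_of_notMem, h, Set.mem_setOf_eq]
    simp_rw [h1]
    rw [setIntegral_indicator measurableSet_Iic]
    have h2 : Set.Ioc s t ∩ Set.Iic τ = Set.Ioc s τ := by
      rw [Set.Ioc_inter_Iic, min_eq_right hτ.2]
    rw [h2, integral_mul_const]
  rw [← hL, ← hR, swap]

lemma weight_identity (Λ Λ' : ℝ → ℝ) (ν : ℝ) {s t : ℝ} (hst : s ≤ t)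
    (hint : IntervalIntegrable Λ' volume s t)
    (hftc : ∀ σ, s ≤ σ → σ ≤ t → Λ t - Λ σ = ∫ τ in σ..t, Λ' τ) :
    Λ t * Real.exp (2*ν*t) - Λ s * Real.exp (2*ν*s)
      = ∫ τ in Set.Ioc s t, (Λ' τ + 2*ν*Λ τ) * Real.exp (2*ν*τ) := by
  set E : ℝ → ℝ := fun τ => Real.exp (2*ν*τ) with hE
  have hEderiv : ∀ x : ℝ, HasDerivAt E (2*ν*E x) x := by
    intro x
    have h1 : HasDerivAt (fun y : ℝ => 2*ν*y) (2*ν) x := by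
      simpa using (hasDerivAt_id x).const_mul (2*ν)
    simpa [hE, mul_comm] using h1.exp
  have hEcont : Continuous E := Real.continuous_exp.comp (by continuity)
  have hΛ'Ioc : IntegrableOn Λ' (Set.Ioc s t) :=
    (intervalIntegrable_iff_integrableOn_Ioc_of_le hst).1 hint
  have hΛcont : ContinuousOn Λ (Set.Icc s t) := by
    have h1 : ContinuousOn (fun σ => Λ t - ∫ τ in σ..t, Λ' τ) (Set.Icc s t) := by
      apply continuousOn_const.sub
      have := intervalIntegral.continuousOn_primitive_interval_left
        (f := Λ') (μ := volume) (a := s) (b := t) ?_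
      · rwa [Set.uIcc_of_le hst] at this
      · rw [Set.uIcc_of_le hst]
        exact (integrableOn_Icc_iff_integrableOn_Ioc (f := Λ')).2
          ((intervalIntegrable_iff_integrableOn_Ioc_of_le hst).1 hint)
    refine h1.congr (fun σ hσ => ?_)
    have := hftc σ hσ.1 hσ.2
    linarith
  -- FTC for E
  have hEftc : ∀ a b : ℝ, (∫ σ in a..b, 2*ν*E σ) = E b - E a := by
    intro a b
    exact intervalIntegral.integral_eq_sub_of_hasDerivAt (fun x _ => hEderiv x)
      ((continuous_const.mul hEcont).intervalIntegrable a b)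
  have hEftcIoc : ∀ a b : ℝ, a ≤ b → (∫ σ in Set.Ioc a b, 2*ν*E σ) = E b - E a := by
    intro a b hab
    rw [← intervalIntegral.integral_of_le hab, hEftc]
  -- integrability facts on Ioc s t
  have hEΛ'int : IntegrableOn (fun τ => E τ * Λ' τ) (Set.Ioc s t) :=
    (intervalIntegrable_iff_integrableOn_Ioc_of_le hst).1
      (hint.continuousOn_mul (hEcont.continuousOn))
  have hEΛint : IntegrableOn (fun τ => 2*ν*E τ * Λ τ) (Set.Ioc s t) := by
    have : ContinuousOn (fun τ => 2*ν*E τ * Λ τ) (Set.Icc s t) :=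
      (continuous_const.mul hEcont).continuousOn.mul hΛcont
    exact (this.integrableOn_compact isCompact_Icc).mono_set Set.Ioc_subset_Icc_self
  -- step 1
  have step1 : ∫ σ in Set.Ioc s t, (2*ν*E σ) * (Λ t - Λ σ)
      = ∫ σ in Set.Ioc s t, (2*ν*E σ) * (∫ τ in Set.Ioc σ t, Λ' τ) := by
    refine setIntegral_congr_fun measurableSet_Ioc (fun σ hσ => ?_)
    rw [← intervalIntegral.integral_of_le hσ.2, ← hftc σ hσ.1.le hσ.2]
  have step2 := tri_swap Λ' (fun σ => 2*ν*E σ) hst hΛ'Ioc (continuous_const.mul hEcont)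
  have step3 : ∫ τ in Set.Ioc s t, (∫ σ in Set.Ioc s τ, 2*ν*E σ) * Λ' τ
      = ∫ τ in Set.Ioc s t, (E τ - E s) * Λ' τ := by
    refine setIntegral_congr_fun measurableSet_Ioc (fun τ hτ => ?_)
    rw [hEftcIoc s τ hτ.1.le]
  -- expand LHS of step1
  have expandL : ∫ σ in Set.Ioc s t, (2*ν*E σ) * (Λ t - Λ σ)
      = Λ t * (E t - E s) - ∫ σ in Set.Ioc s t, 2*ν*E σ * Λ σ := by
    have h1 : ∀ σ, (2*ν*E σ) * (Λ t - Λ σ) = (2*ν*E σ) * Λ t - 2*ν*E σ * Λ σ := by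
      intro σ; ring
    simp_rw [h1]
    rw [integral_sub _ hEΛint]
    · rw [integral_mul_const, hEftcIoc s t hst]; ring
    · have : IntegrableOn (fun σ => 2*ν*E σ) (Set.Ioc s t) :=
        ((continuous_const.mul hEcont).continuousOn.integrableOn_compact isCompact_Icc).mono_set
          Set.Ioc_subset_Icc_self
      exact this.mul_const (Λ t)
  -- expand RHS of step3
  have expandR : ∫ τ in Set.Ioc s t, (E τ - E s) * Λ' τ
      = (∫ τ in Set.Ioc s t, E τ * Λ' τ) - E s * (Λ t - Λ s) := by
    have h1 : ∀ τ, (E τ - E s) * Λ' τ = E τ * Λ' τ - E s * Λ' τ := by intro τ; ring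
    simp_rw [h1]
    rw [integral_sub hEΛ'int (hΛ'Ioc.const_mul (E s))]
    rw [integral_const_mul]
    congr 1
    rw [hftc s le_rfl hst, intervalIntegral.integral_of_le hst]
  -- combine
  have key : (∫ τ in Set.Ioc s t, E τ * Λ' τ) + (∫ σ in Set.Ioc s t, 2*ν*E σ * Λ σ)
      = Λ t * E t - Λ s * E s := by
    have := step1
    rw [expandL, step2, step3, expandR] at this
    linarith
  have final : ∫ τ in Set.Ioc s t, (Λ' τ + 2*ν*Λ τ) * E τ
      = (∫ τ in Set.Ioc s t, E τ * Λ' τ) + (∫ σ in Set.Ioc s t, 2*ν*E σ * Λ σ) := by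
    rw [← integral_add hEΛ'int hEΛint]
    refine setIntegral_congr_fun measurableSet_Ioc (fun τ _ => ?_)
    ring
  rw [final, key]

lemma gronwall_step (ψ w : ℝ → ℝ) (s t : ℝ) (hst : s ≤ t)
    (hψi : IntervalIntegrable ψ volume s t)
    (hψw : IntervalIntegrable (fun τ => ψ τ * w τ) volume s t)
    (hψ0 : ∀ τ ∈ Set.Icc s t, 0 ≤ ψ τ)
    (hwnn : ∀ τ ∈ Set.Icc s t, 0 ≤ w τ)
    (hmain : ∀ r ∈ Set.Icc s t, w r ≤ w s + ∫ τ in s..r, ψ τ * w τ)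
    (θ : ℝ) (hθ0 : 0 < θ) (hθ1 : θ < 1) (i : ℕ)
    (hΨ : (∫ τ in s..t, ψ τ) ≤ i * θ) :
    w t ≤ w s * ((1 - θ)⁻¹) ^ i := by
  have h1θ : 0 < 1 - θ := by linarith
  have hws : 0 ≤ w s := hwnn s ⟨le_rfl, hst⟩
  set y : ℝ → ℝ := fun r => w s + ∫ τ in s..r, ψ τ * w τ with hy
  set Ψ : ℝ → ℝ := fun r => ∫ τ in s..r, ψ τ with hΨdef
  have hsub : ∀ r₁ r₂ : ℝ, s ≤ r₁ → r₁ ≤ r₂ → r₂ ≤ t →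
      Set.uIcc r₁ r₂ ⊆ Set.uIcc s t := by
    intro r₁ r₂ h1 h2 h3
    rw [Set.uIcc_of_le hst, Set.uIcc_of_le h2]
    exact Set.Icc_subset_Icc h1 h3
  have hψw_sub : ∀ r₁ r₂ : ℝ, s ≤ r₁ → r₁ ≤ r₂ → r₂ ≤ t →
      IntervalIntegrable (fun τ => ψ τ * w τ) volume r₁ r₂ :=
    fun r₁ r₂ h1 h2 h3 => hψw.mono_set (hsub r₁ r₂ h1 h2 h3)
  have hψ_sub : ∀ r₁ r₂ : ℝ, s ≤ r₁ → r₁ ≤ r₂ → r₂ ≤ t →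
      IntervalIntegrable ψ volume r₁ r₂ :=
    fun r₁ r₂ h1 h2 h3 => hψi.mono_set (hsub r₁ r₂ h1 h2 h3)
  have hyd : ∀ r₁ r₂ : ℝ, s ≤ r₁ → r₁ ≤ r₂ → r₂ ≤ t →
      y r₂ = y r₁ + ∫ τ in r₁..r₂, ψ τ * w τ := by
    intro r₁ r₂ h1 h2 h3
    have := intervalIntegral.integral_add_adjacent_intervals
      (hψw_sub s r₁ le_rfl h1 (h2.trans h3)) (hψw_sub r₁ r₂ h1 h2 h3)
    simp only [hy]
    linarith
  have hΨd : ∀ r₁ r₂ : ℝ, s ≤ r₁ → r₁ ≤ r₂ → r₂ ≤ t →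
      Ψ r₂ = Ψ r₁ + ∫ τ in r₁..r₂, ψ τ := by
    intro r₁ r₂ h1 h2 h3
    have := intervalIntegral.integral_add_adjacent_intervals
      (hψ_sub s r₁ le_rfl h1 (h2.trans h3)) (hψ_sub r₁ r₂ h1 h2 h3)
    simp only [hΨdef]
    linarith
  have hy_mono : ∀ r₁ r₂ : ℝ, s ≤ r₁ → r₁ ≤ r₂ → r₂ ≤ t → y r₁ ≤ y r₂ := by
    intro r₁ r₂ h1 h2 h3
    rw [hyd r₁ r₂ h1 h2 h3]
    have : 0 ≤ ∫ τ in r₁..r₂, ψ τ * w τ := by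
      apply intervalIntegral.integral_nonneg h2
      intro u hu
      have hu' : u ∈ Set.Icc s t := ⟨h1.trans hu.1, hu.2.trans h3⟩
      exact mul_nonneg (hψ0 u hu') (hwnn u hu')
    linarith
  have hy_nonneg : ∀ r ∈ Set.Icc s t, 0 ≤ y r := by
    intro r hr
    have := hy_mono s r le_rfl hr.1 hr.2
    have hys : y s = w s := by simp [hy]
    linarith [hys ▸ this]
  have hwy : ∀ r ∈ Set.Icc s t, w r ≤ y r := hmain
  have key : ∀ r₁ r₂ : ℝ, s ≤ r₁ → r₁ ≤ r₂ → r₂ ≤ t →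
      y r₂ ≤ y r₁ + y r₂ * (Ψ r₂ - Ψ r₁) := by
    intro r₁ r₂ h1 h2 h3
    have hint : (∫ τ in r₁..r₂, ψ τ * w τ) ≤ ∫ τ in r₁..r₂, ψ τ * y r₂ := by
      apply intervalIntegral.integral_mono_on h2 (hψw_sub r₁ r₂ h1 h2 h3)
        ((hψ_sub r₁ r₂ h1 h2 h3).mul_const (y r₂))
      intro u hu
      have hu' : u ∈ Set.Icc s t := ⟨h1.trans hu.1, hu.2.trans h3⟩
      have hwu : w u ≤ y r₂ := (hwy u hu').trans (hy_mono u r₂ hu'.1 hu.2 h3)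
      exact mul_le_mul_of_nonneg_left hwu (hψ0 u hu')
    have hmc : (∫ τ in r₁..r₂, ψ τ * y r₂) = (Ψ r₂ - Ψ r₁) * y r₂ := by
      rw [intervalIntegral.integral_mul_const]
      have := hΨd r₁ r₂ h1 h2 h3
      have h' : (∫ τ in r₁..r₂, ψ τ) = Ψ r₂ - Ψ r₁ := by linarith
      rw [h']
    have := hyd r₁ r₂ h1 h2 h3
    nlinarith [hint, hmc]
  have hc1 : 1 ≤ (1 - θ)⁻¹ := by
    have hp : 0 < (1 - θ)⁻¹ := inv_pos.2 h1θ
    have hm : (1 - θ) * (1 - θ)⁻¹ = 1 := mul_inv_cancel₀ (ne_of_gt h1θ)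
    nlinarith
  have ind : ∀ j : ℕ, ∀ r, r ∈ Set.Icc s t → Ψ r ≤ j * θ →
      y r ≤ w s * ((1 - θ)⁻¹) ^ j := by
    intro j
    induction j with
    | zero =>
      intro r hr hΨr
      have hΨnn : 0 ≤ Ψ r := by
        apply intervalIntegral.integral_nonneg hr.1
        intro u hu
        exact hψ0 u ⟨hu.1, hu.2.trans hr.2⟩
      have hΨs : Ψ s = 0 := by simp [hΨdef]
      have hk := key s r le_rfl hr.1 hr.2
      have hΨ0 : Ψ r = 0 := le_antisymm (by simpa using hΨr) hΨnn
      have hys : y s = w s := by simp [hy]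
      simp only [pow_zero, mul_one]
      rw [hΨ0, hΨs] at hk
      simpa [hys] using hk
    | succ i ih =>
      intro r hr hΨr
      by_cases h : Ψ r ≤ i * θ
      · have := ih r hr h
        have hpow : ((1 - θ)⁻¹) ^ i ≤ ((1 - θ)⁻¹) ^ (i + 1) :=
          pow_le_pow_right₀ hc1 (Nat.le_succ i)
        calc y r ≤ w s * ((1 - θ)⁻¹) ^ i := this
          _ ≤ w s * ((1 - θ)⁻¹) ^ (i + 1) := by
            exact mul_le_mul_of_nonneg_left hpow hws
      · push_neg at h
        have hΨcont : ContinuousOn Ψ (Set.Icc s r) := by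
          have h1 := intervalIntegral.continuousOn_primitive_interval'
            (hψ_sub s r le_rfl hr.1 hr.2) (left_mem_uIcc (a := s) (b := r))
          rwa [Set.uIcc_of_le hr.1] at h1
        have hΨs : Ψ s = 0 := by simp [hΨdef]
        have hmem : (i * θ : ℝ) ∈ Set.Icc (Ψ s) (Ψ r) := by
          constructor
          · rw [hΨs]; positivity
          · exact h.le
        obtain ⟨r', hr'mem, hr'⟩ := intermediate_value_Icc hr.1 hΨcont hmem
        have hr't : r' ∈ Set.Icc s t := ⟨hr'mem.1, hr'mem.2.trans hr.2⟩
        have ihr' : y r' ≤ w s * ((1 - θ)⁻¹) ^ i := ih r' hr't (by rw [hr'])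
        have hk := key r' r hr'mem.1 hr'mem.2 hr.2
        have hΨdiff : Ψ r - Ψ r' ≤ θ := by
          rw [hr']
          push_cast at hΨr ⊢
          linarith
        have hyr : 0 ≤ y r := hy_nonneg r hr
        have h2 : y r * (1 - θ) ≤ y r' := by
          have : y r * (Ψ r - Ψ r') ≤ y r * θ := mul_le_mul_of_nonneg_left hΨdiff hyr
          nlinarith
        have h3 : y r ≤ y r' * (1 - θ)⁻¹ := by
          rw [← le_div_iff₀ h1θ] at h2
          rwa [div_eq_mul_inv] at h2
        calc y r ≤ y r' * (1 - θ)⁻¹ := h3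
          _ ≤ (w s * ((1 - θ)⁻¹) ^ i) * (1 - θ)⁻¹ :=
            mul_le_mul_of_nonneg_right ihr' (by positivity)
          _ = w s * ((1 - θ)⁻¹) ^ (i + 1) := by ring
  have := ind i t ⟨hst, le_rfl⟩ hΨ
  exact le_trans (hmain t ⟨hst, le_rfl⟩) this

/-- Gronwall-type lemma with a translation-bounded coefficient (Lemma 5.3 / `GRNWOLD`).
If `Λ' t + 2ν * Λ t ≤ ψ t * Λ t` a.e. on `[0,∞)`, with
`∫_s^t ψ ≤ ν (t - s) + K` for all `t > s ≥ 0`, then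
`Λ t ≤ exp K * Λ 0 * exp (-ν t)` for all `t ≥ 0`. -/
theorem stmt_1
    (Λ Λ' ψ : ℝ → ℝ) (ν K : ℝ) (hν : 0 < ν) (hK : 0 ≤ K)
    (hΛnn : ∀ t, 0 ≤ t → 0 ≤ Λ t)
    (hψnn : ∀ t, 0 ≤ t → 0 ≤ ψ t)
    (hΛ'int : ∀ s t : ℝ, 0 ≤ s → s ≤ t → IntervalIntegrable Λ' volume s t)
    (hFTC : ∀ s t : ℝ, 0 ≤ s → s ≤ t → Λ t - Λ s = ∫ τ in s..t, Λ' τ)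
    (hψint : ∀ s t : ℝ, 0 ≤ s → s ≤ t → IntervalIntegrable ψ volume s t)
    (hψbound : ∀ s t : ℝ, 0 ≤ s → s < t → (∫ τ in s..t, ψ τ) ≤ ν * (t - s) + K)
    (hineq : ∀ᵐ t ∂volume, 0 ≤ t → Λ' t + 2 * ν * Λ t ≤ ψ t * Λ t) :
    ∀ t : ℝ, 0 ≤ t → Λ t ≤ Real.exp K * Λ 0 * Real.exp (-ν * t) := by
  
  intro t₀ ht₀
  rcases eq_or_lt_of_le ht₀ with h0 | h0
  · -- t₀ = 0
    rw [← h0]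
    have h1 : Λ 0 ≤ Real.exp K * Λ 0 :=
      le_mul_of_one_le_left (hΛnn 0 le_rfl) (Real.one_le_exp hK)
    simpa using h1
  · -- 0 < t₀
    set w : ℝ → ℝ := fun τ => Λ τ * Real.exp (2*ν*τ) with hw
    have hEcont : Continuous (fun τ : ℝ => Real.exp (2*ν*τ)) :=
      Real.continuous_exp.comp (by continuity)
    have hΛcontT : ContinuousOn Λ (Set.Icc 0 t₀) := by
      have hprim : ContinuousOn (fun r => Λ 0 + ∫ x in (0:ℝ)..r, Λ' x) (Set.Icc 0 t₀) := by
        apply continuousOn_const.add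
        have h1 := intervalIntegral.continuousOn_primitive_interval'
          (hΛ'int 0 t₀ le_rfl ht₀) (left_mem_uIcc (a := (0:ℝ)) (b := t₀))
        rwa [Set.uIcc_of_le ht₀] at h1
      refine hprim.congr (fun r hr => ?_)
      have := hFTC 0 r le_rfl hr.1
      linarith
    have hwcont : ContinuousOn w (Set.Icc 0 t₀) := hΛcontT.mul hEcont.continuousOn
    have hwnn : ∀ τ ∈ Set.Icc 0 t₀, 0 ≤ w τ := fun τ hτ =>
      mul_nonneg (hΛnn τ hτ.1) (Real.exp_nonneg _)
    have hψwint : IntervalIntegrable (fun τ => ψ τ * w τ) volume 0 t₀ := by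
      apply (hψint 0 t₀ le_rfl ht₀).mul_continuousOn
      rwa [Set.uIcc_of_le ht₀]
    -- the integral inequality
    have hmain : ∀ r ∈ Set.Icc 0 t₀, w r ≤ w 0 + ∫ τ in (0:ℝ)..r, ψ τ * w τ := by
      intro r hr
      have hid := weight_identity Λ Λ' ν hr.1 (hΛ'int 0 r le_rfl hr.1)
        (fun σ h1 h2 => hFTC σ r h1 h2)
      -- integrability of LHS integrand on Ioc 0 r
      have hΛcontr : ContinuousOn Λ (Set.Icc 0 r) :=
        hΛcontT.mono (Set.Icc_subset_Icc_right hr.2)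
      have h1 : IntegrableOn (fun τ => Real.exp (2*ν*τ) * Λ' τ) (Set.Ioc 0 r) :=
        (intervalIntegrable_iff_integrableOn_Ioc_of_le hr.1).1
          ((hΛ'int 0 r le_rfl hr.1).continuousOn_mul hEcont.continuousOn)
      have h2 : IntegrableOn (fun τ => 2*ν*Real.exp (2*ν*τ) * Λ τ) (Set.Ioc 0 r) := by
        have : ContinuousOn (fun τ => 2*ν*Real.exp (2*ν*τ) * Λ τ) (Set.Icc 0 r) :=
          ((continuous_const.mul hEcont).continuousOn).mul hΛcontr
        exact (this.integrableOn_compact isCompact_Icc).mono_set Set.Ioc_subset_Icc_self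
      have hLHSint : IntegrableOn
          (fun τ => (Λ' τ + 2*ν*Λ τ) * Real.exp (2*ν*τ)) (Set.Ioc 0 r) :=
        (h1.add h2).congr (ae_of_all _ (fun τ => by simp only [Pi.add_apply]; ring))
      have hRHSint : IntegrableOn (fun τ => ψ τ * w τ) (Set.Ioc 0 r) :=
        ((intervalIntegrable_iff_integrableOn_Ioc_of_le ht₀).1 hψwint).mono_set
          (Set.Ioc_subset_Ioc_right hr.2)
      have hle : (∫ τ in Set.Ioc 0 r, (Λ' τ + 2*ν*Λ τ) * Real.exp (2*ν*τ))
          ≤ ∫ τ in Set.Ioc 0 r, ψ τ * w τ := by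
        apply integral_mono_ae hLHSint hRHSint
        filter_upwards [ae_restrict_of_ae hineq, ae_restrict_mem measurableSet_Ioc]
          with τ hτ1 hτ2
        have hτ0 : 0 ≤ τ := hτ2.1.le
        have := hτ1 hτ0
        have hEτ : 0 ≤ Real.exp (2*ν*τ) := Real.exp_nonneg _
        have hmul := mul_le_mul_of_nonneg_right this hEτ
        calc (Λ' τ + 2*ν*Λ τ) * Real.exp (2*ν*τ) ≤ ψ τ * Λ τ * Real.exp (2*ν*τ) := hmul
          _ = ψ τ * w τ := by rw [hw]; ring
      have hw0 : w 0 = Λ 0 * Real.exp (2*ν*0) := rfl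
      have hint_eq : (∫ τ in (0:ℝ)..r, ψ τ * w τ) = ∫ τ in Set.Ioc 0 r, ψ τ * w τ :=
        intervalIntegral.integral_of_le hr.1
      rw [hint_eq]
      have : w r - w 0 = ∫ τ in Set.Ioc 0 r, (Λ' τ + 2*ν*Λ τ) * Real.exp (2*ν*τ) := hid
      linarith
    -- apply Gronwall for each n
    set P : ℝ := ν * t₀ + K with hP
    have hPpos : 0 < P := by positivity
    have hbound : ∀ n : ℕ, P < n → w t₀ ≤ w 0 * ((1 - P/n)⁻¹) ^ n := by
      intro n hn
      have hn0 : (0:ℝ) < n := lt_trans hPpos hn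
      have hθ0 : 0 < P/n := div_pos hPpos hn0
      have hθ1 : P/n < 1 := (div_lt_one hn0).2 hn
      have hΨ : (∫ τ in (0:ℝ)..t₀, ψ τ) ≤ n * (P/n) := by
        have h1 : (n:ℝ) * (P/n) = P := by field_simp
        rw [h1]
        simpa [hP] using hψbound 0 t₀ le_rfl h0
      exact gronwall_step ψ w 0 t₀ ht₀ (hψint 0 t₀ le_rfl ht₀) hψwint
        (fun τ hτ => hψnn τ hτ.1) hwnn hmain (P/n) hθ0 hθ1 n hΨ
    -- take the limit n → ∞
    have htend : Filter.Tendsto (fun n : ℕ => w 0 * ((1 - P/n)⁻¹) ^ n)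
        Filter.atTop (nhds (w 0 * Real.exp P)) := by
      have h1 : Filter.Tendsto (fun n : ℕ => ((1 - P/n) : ℝ) ^ n)
          Filter.atTop (nhds (Real.exp (-P))) := by
        have := Real.tendsto_one_add_div_pow_exp (-P)
        refine this.congr (fun n => ?_)
        congr 1
        rw [neg_div, ← sub_eq_add_neg]
      have h2 : Filter.Tendsto (fun n : ℕ => (((1 - P/n) : ℝ) ^ n)⁻¹)
          Filter.atTop (nhds (Real.exp P)) := by
        have := h1.inv₀ (Real.exp_ne_zero (-P))
        rwa [Real.exp_neg, inv_inv] at this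
      exact (h2.const_mul (w 0)).congr (fun n => by rw [inv_pow])
    have hev : ∀ᶠ n : ℕ in Filter.atTop, w t₀ ≤ w 0 * ((1 - P/n)⁻¹) ^ n := by
      rw [Filter.eventually_atTop]
      refine ⟨⌈P⌉₊ + 1, fun n hn => hbound n ?_⟩
      have h1 : P ≤ (⌈P⌉₊ : ℝ) := Nat.le_ceil P
      have h2 : ((⌈P⌉₊ : ℝ)) < n := by
        exact_mod_cast Nat.lt_of_succ_le hn
      linarith
    have hfin : w t₀ ≤ w 0 * Real.exp P := ge_of_tendsto htend hev
    -- final algebra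
    have hw0' : w 0 = Λ 0 := by simp [hw]
    have hwt : w t₀ = Λ t₀ * Real.exp (2*ν*t₀) := rfl
    rw [hw0'] at hfin
    have hstep := mul_le_mul_of_nonneg_right hfin (Real.exp_nonneg (-(2*ν*t₀)))
    calc Λ t₀ = Λ t₀ * Real.exp (2*ν*t₀) * Real.exp (-(2*ν*t₀)) := by
          rw [mul_assoc, ← Real.exp_add]
          simp
      _ ≤ Λ 0 * Real.exp P * Real.exp (-(2*ν*t₀)) := by rw [← hwt]; exact hstep
      _ = Real.exp K * Λ 0 * Real.exp (-ν*t₀) := by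
          rw [mul_assoc, ← Real.exp_add, hP]
          have : ν * t₀ + K + -(2*ν*t₀) = K + -ν*t₀ := by ring
          rw [this, Real.exp_add]
          ring
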